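/- Let d ≥ 1, 0 ≤ k ≤ d−1, and ε > 0 be a real number. Then there exists a d-polytope P such that f_k(P) < (ρ(d, k) + ε) · f_0(P). -/

import Mathlib

noncomputable section

/-- Euclidean space `ℝ^n`. -/
abbrev Euc (n : ℕ) : Type := EuclideanSpace ℝ (Fin n)

/-- A polytope is the convex hull of finitely many points. -/
def IsPolytope {E : Type*} [NormedAddCommGroup E] [InnerProductSpace ℝ E] (P : Set E) : Prop :=
  ∃ V : Finset E, P = convexHull ℝ (V : Set E)

/-- `G` is a face of `P`: `P` itself, the empty set, or the intersection of `P` with a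
supporting hyperplane. -/
def IsFace {E : Type*} [NormedAddCommGroup E] [InnerProductSpace ℝ E] (P G : Set E) : Prop :=
  G = P ∨ G = ∅ ∨ ∃ f : E →L[ℝ] ℝ, f ≠ 0 ∧ ∃ c : ℝ,
    (∀ x ∈ P, f x ≤ c) ∧ G = {x ∈ P | f x = c}

/-- The (affine) dimension of a nonempty set. -/
noncomputable def dimSet {E : Type*} [NormedAddCommGroup E] [InnerProductSpace ℝ E]
    (s : Set E) : ℕ :=
  Module.finrank ℝ (affineSpan ℝ s).direction

/-- `G` is a `k`-dimensional face of `P`. -/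
def IsKFace {E : Type*} [NormedAddCommGroup E] [InnerProductSpace ℝ E]
    (P : Set E) (k : ℕ) (G : Set E) : Prop :=
  IsFace P G ∧ G.Nonempty ∧ dimSet G = k

/-- `fVec P k` is the number of `k`-dimensional faces of `P`. -/
noncomputable def fVec {E : Type*} [NormedAddCommGroup E] [InnerProductSpace ℝ E]
    (P : Set E) (k : ℕ) : ℕ :=
  {G | IsKFace P k G}.ncard

/-- `ρ(d,k) = (1/2)(binom(⌈d/2⌉,k) + binom(⌊d/2⌋,k))`. -/
def rho (d k : ℕ) : ℚ :=
  (((d + 1) / 2).choose k + (d / 2).choose k) / 2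

namespace RhoAux

open Finset
open scoped Classical

/-! ### Labels -/

/-- Labels classifying possible argmax subsets of `Fin s` for quadratics on a "parabola
polygon" with `s` vertices: a singleton, an adjacent pair `{u, u+1}`, the end pair
`{0, s-1}` (only when `3 ≤ s`), or the full set (only when `3 ≤ s`). -/
def Lab (s : ℕ) : Type :=
  Fin s ⊕ (Fin (s - 1) ⊕ PLift (3 ≤ s)) ⊕ PLift (3 ≤ s)

instance (s : ℕ) : Fintype (Lab s) := by unfold Lab; infer_instance
instance (s : ℕ) : DecidableEq (Lab s) := by unfold Lab; infer_instance

attribute [reducible] Lab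

/-- Dimension associated to a label. -/
def dl {s : ℕ} : Lab s → ℕ
  | .inl _ => 0
  | .inr (.inl _) => 1
  | .inr (.inr _) => 2

lemma dl_le {s : ℕ} (l : Lab s) : dl l ≤ 2 := by
  rcases l with u | (u | h) | h <;> simp [dl]

lemma dl_eq_two {s : ℕ} {l : Lab s} (h : dl l = 2) : 3 ≤ s := by
  rcases l with u | (u | h') | h' <;> simp [dl] at h ⊢
  exact h'.down

/-- The subset of `Fin s` realized by a label. -/
def realize {s : ℕ} : Lab s → Finset (Fin s)
  | .inl u => {u}
  | .inr (.inl (.inl u)) =>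
      {⟨u.1, by have := u.isLt; omega⟩, ⟨u.1 + 1, by have := u.isLt; omega⟩}
  | .inr (.inl (.inr h)) =>
      {⟨0, by have := h.down; omega⟩, ⟨s - 1, by have := h.down; omega⟩}
  | .inr (.inr _) => univ

lemma realize_nonempty {s : ℕ} (hs : 2 ≤ s) (l : Lab s) : (realize l).Nonempty := by
  rcases l with u | (u | h) | h
  · exact ⟨u, by simp [realize]⟩
  · exact ⟨_, Finset.mem_insert_self _ _⟩
  · exact ⟨_, Finset.mem_insert_self _ _⟩
  · exact ⟨⟨0, by omega⟩, Finset.mem_univ _⟩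

/-- The label realizing the full set. -/
def univLab (s : ℕ) (hs : 2 ≤ s) : Lab s :=
  if h : 3 ≤ s then .inr (.inr ⟨h⟩) else .inr (.inl (.inl ⟨0, by omega⟩))

lemma realize_univLab (s : ℕ) (hs : 2 ≤ s) : realize (univLab s hs) = univ := by
  unfold univLab
  split_ifs with h
  · rfl
  · have hs2 : s = 2 := by omega
    subst hs2
    ext u
    simp only [realize, mem_insert, mem_singleton, mem_univ, iff_true, Fin.ext_iff]
    omega

lemma dl_univLab (s : ℕ) (hs : 2 ≤ s) :
    dl (univLab s hs) = if 3 ≤ s then 2 else 1 := by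
  unfold univLab; split_ifs <;> rfl

/-! ### The parabola point map and per-label difference vectors -/

/-- Point on the parabola. -/
def pd {s : ℕ} (u : Fin s) : ℝ × ℝ := (((u : ℕ) : ℝ), ((u : ℕ) : ℝ) ^ 2)

/-- Per-label generating vectors in `ℝ × ℝ`. -/
def vecs {s : ℕ} : (l : Lab s) → Fin (dl l) → ℝ × ℝ
  | .inl _ => ![]
  | .inr (.inl (.inl u)) => fun _ => (1, 2 * ((u : ℕ) : ℝ) + 1)
  | .inr (.inl (.inr _)) => fun _ => (((s - 1 : ℕ) : ℝ), ((s - 1 : ℕ) : ℝ) ^ 2)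
  | .inr (.inr _) => ![(1, 1), (2, 4)]

lemma dl_pair {s : ℕ} (w : Fin (s-1)) : dl (.inr (.inl (.inl w)) : Lab s) = 1 := rfl
lemma dl_end {s : ℕ} (h : PLift (3 ≤ s)) : dl (.inr (.inl (.inr h)) : Lab s) = 1 := rfl
lemma dl_full {s : ℕ} (h : PLift (3 ≤ s)) : dl (.inr (.inr h) : Lab s) = 2 := rfl

lemma vecs_span {s : ℕ} (l : Lab s) {u v : Fin s}
    (hu : u ∈ realize l) (hv : v ∈ realize l) :
    pd u - pd v ∈ Submodule.span ℝ (Set.range (vecs l)) := by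
  have hmem : ∀ (r : Fin (dl l)), vecs l r ∈ Submodule.span ℝ (Set.range (vecs l)) :=
    fun r => Submodule.subset_span (Set.mem_range_self r)
  rcases l with w | (w | h) | h
  · -- singleton
    simp only [realize, mem_singleton] at hu hv
    rw [hu, hv, sub_self]
    exact Submodule.zero_mem _
  · -- adjacent pair
    simp only [realize, mem_insert, mem_singleton] at hu hv
    set r0 : Fin (dl (.inr (.inl (.inl w)) : Lab s)) := ⟨0, by rw [dl_pair]; omega⟩ with hr0
    have hvec : pd (⟨w.1 + 1, by have := w.isLt; omega⟩ : Fin s) -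
        pd (⟨w.1, by have := w.isLt; omega⟩ : Fin s) = vecs (.inr (.inl (.inl w))) r0 := by
      show _ = ((1 : ℝ), 2 * ((w : ℕ) : ℝ) + 1)
      simp only [pd, Prod.mk_sub_mk, Prod.mk.injEq]
      constructor <;> push_cast <;> ring
    rcases hu with rfl | rfl <;> rcases hv with rfl | rfl
    · rw [sub_self]; exact Submodule.zero_mem _
    · rw [show pd (⟨w.1, by have := w.isLt; omega⟩ : Fin s) -
          pd (⟨w.1 + 1, by have := w.isLt; omega⟩ : Fin s) =
          -(vecs (.inr (.inl (.inl w))) r0) by rw [← hvec]; abel]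
      exact Submodule.neg_mem _ (hmem r0)
    · rw [hvec]; exact hmem r0
    · rw [sub_self]; exact Submodule.zero_mem _
  · -- end pair
    simp only [realize, mem_insert, mem_singleton] at hu hv
    set r0 : Fin (dl (.inr (.inl (.inr h)) : Lab s)) := ⟨0, by rw [dl_end]; omega⟩ with hr0
    have hvec : pd (⟨s - 1, by have := h.down; omega⟩ : Fin s) -
        pd (⟨0, by have := h.down; omega⟩ : Fin s) = vecs (.inr (.inl (.inr h))) r0 := by
      show _ = (((s - 1 : ℕ) : ℝ), ((s - 1 : ℕ) : ℝ) ^ 2)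
      simp only [pd, Prod.mk_sub_mk, Prod.mk.injEq]
      constructor <;> push_cast <;> ring
    rcases hu with rfl | rfl <;> rcases hv with rfl | rfl
    · rw [sub_self]; exact Submodule.zero_mem _
    · rw [show pd (⟨0, by have := h.down; omega⟩ : Fin s) -
          pd (⟨s - 1, by have := h.down; omega⟩ : Fin s) =
          -(vecs (.inr (.inl (.inr h))) r0) by rw [← hvec]; abel]
      exact Submodule.neg_mem _ (hmem r0)
    · rw [hvec]; exact hmem r0
    · rw [sub_self]; exact Submodule.zero_mem _
  · -- full set
    set r0 : Fin (dl (.inr (.inr h) : Lab s)) := ⟨0, by rw [dl_full]; omega⟩ with hr0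
    set r1 : Fin (dl (.inr (.inr h) : Lab s)) := ⟨1, by rw [dl_full]; omega⟩ with hr1
    have h0 : vecs (.inr (.inr h) : Lab s) r0 = (1, 1) := rfl
    have h1 : vecs (.inr (.inr h) : Lab s) r1 = (2, 4) := rfl
    set U : ℝ := ((u : ℕ) : ℝ)
    set W : ℝ := ((v : ℕ) : ℝ)
    have hx : pd u - pd v = (2 * (U - W) - (U ^ 2 - W ^ 2)) • ((1 : ℝ), (1 : ℝ)) +
        (((U ^ 2 - W ^ 2) - (U - W)) / 2) • ((2 : ℝ), (4 : ℝ)) := by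
      simp only [pd, Prod.mk_sub_mk, Prod.smul_mk, smul_eq_mul, Prod.mk_add_mk, Prod.mk.injEq]
      constructor <;> ring
    rw [hx]
    exact Submodule.add_mem _
      (Submodule.smul_mem _ _ (by rw [← h0]; exact hmem r0))
      (Submodule.smul_mem _ _ (by rw [← h1]; exact hmem r1))

lemma vecs_diff {s : ℕ} (hs : 2 ≤ s) (l : Lab s) (r : Fin (dl l)) :
    ∃ u ∈ realize l, ∃ v ∈ realize l, pd u - pd v = vecs l r := by
  rcases l with w | (w | h) | h
  · exact r.elim0
  · refine ⟨⟨w.1 + 1, by have := w.isLt; omega⟩, by simp [realize],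
      ⟨w.1, by have := w.isLt; omega⟩, by simp [realize], ?_⟩
    show _ = ((1 : ℝ), 2 * ((w : ℕ) : ℝ) + 1)
    simp only [pd, Prod.mk_sub_mk, Prod.mk.injEq]
    constructor <;> push_cast <;> ring
  · refine ⟨⟨s - 1, by have := h.down; omega⟩, by simp [realize],
      ⟨0, by have := h.down; omega⟩, by simp [realize], ?_⟩
    show _ = (((s - 1 : ℕ) : ℝ), ((s - 1 : ℕ) : ℝ) ^ 2)
    simp only [pd, Prod.mk_sub_mk, Prod.mk.injEq]
    constructor <;> push_cast <;> ring
  · have h3 := h.down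
    obtain ⟨rv, hrv⟩ := r
    rw [dl_full] at hrv
    have : rv = 0 ∨ rv = 1 := by omega
    rcases this with rfl | rfl
    · refine ⟨⟨1, by omega⟩, mem_univ _, ⟨0, by omega⟩, mem_univ _, ?_⟩
      show _ = ((1 : ℝ), (1 : ℝ))
      simp only [pd, Prod.mk_sub_mk]
      norm_num
    · refine ⟨⟨2, by omega⟩, mem_univ _, ⟨0, by omega⟩, mem_univ _, ?_⟩
      show _ = ((2 : ℝ), (4 : ℝ))
      simp only [pd, Prod.mk_sub_mk]
      norm_num

lemma vecs_indep {s : ℕ} (l : Lab s) : LinearIndependent ℝ (vecs l) := by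
  rcases l with w | (w | h) | h
  · haveI : IsEmpty (Fin (dl (.inl w : Lab s))) := ⟨fun r => r.elim0⟩
    exact linearIndependent_empty_type
  · haveI : Unique (Fin (dl (.inr (.inl (.inl w)) : Lab s))) :=
      ⟨⟨⟨0, by rw [dl_pair]; omega⟩⟩, fun a => Fin.ext (by
        show (a : ℕ) = 0
        have h1 : (a : ℕ) < 1 := a.isLt
        omega)⟩
    apply linearIndependent_unique_iff.2
    show ((1 : ℝ), 2 * ((w : ℕ) : ℝ) + 1) ≠ 0
    simp only [ne_eq, Prod.mk_eq_zero, not_and]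
    intro h1
    exact absurd h1 one_ne_zero
  · haveI : Unique (Fin (dl (.inr (.inl (.inr h)) : Lab s))) :=
      ⟨⟨⟨0, by rw [dl_end]; omega⟩⟩, fun a => Fin.ext (by
        show (a : ℕ) = 0
        have h1 : (a : ℕ) < 1 := a.isLt
        omega)⟩
    apply linearIndependent_unique_iff.2
    show (((s - 1 : ℕ) : ℝ), ((s - 1 : ℕ) : ℝ) ^ 2) ≠ 0
    have h3 := h.down
    simp only [ne_eq, Prod.mk_eq_zero, not_and]
    intro h1
    exfalso
    exact (Nat.cast_ne_zero.2 (by omega : s - 1 ≠ 0)) h1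
  · have : LinearIndependent ℝ (![((1:ℝ),(1:ℝ)), ((2:ℝ),(4:ℝ))]) := by
      rw [linearIndependent_fin2]
      refine ⟨by norm_num [Prod.ext_iff], fun a ha => ?_⟩
      rw [Prod.ext_iff] at ha
      simp only [Matrix.cons_val_zero, Matrix.cons_val_one, Matrix.head_cons,
        Prod.smul_mk, smul_eq_mul] at ha
      obtain ⟨h1, h2⟩ := ha
      nlinarith
    exact this

/-! ### Classification of quadratic argmax sets -/

lemma classify (s : ℕ) (hs : 2 ≤ s) (a b : ℝ) :
    ∃ l : Lab s,
      univ.filter (fun u : Fin s => a * ((u : ℕ) : ℝ) + b * ((u : ℕ) : ℝ) ^ 2 =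
        univ.sup' ⟨⟨0, by omega⟩, mem_univ _⟩
          (fun u : Fin s => a * ((u : ℕ) : ℝ) + b * ((u : ℕ) : ℝ) ^ 2)) = realize l := by
  classical
  set q : Fin s → ℝ := fun u => a * ((u : ℕ) : ℝ) + b * ((u : ℕ) : ℝ) ^ 2 with hqdef
  set c : ℝ := univ.sup' ⟨⟨0, by omega⟩, mem_univ _⟩ q with hcdef
  have hle : ∀ u, q u ≤ c := fun u => le_sup' q (mem_univ u)
  obtain ⟨umax, -, humax⟩ := exists_mem_eq_sup' (⟨⟨0, by omega⟩, mem_univ _⟩ :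
    (univ : Finset (Fin s)).Nonempty) q
  set T : Finset (Fin s) := univ.filter (fun u => q u = c) with hTdef
  have hmemT : ∀ u, u ∈ T ↔ q u = c := fun u => by simp [hTdef]
  have hne : T.Nonempty := ⟨umax, (hmemT _).2 humax.symm⟩
  have hqval : ∀ u : Fin s, q u = a * ((u : ℕ) : ℝ) + b * ((u : ℕ) : ℝ) ^ 2 := fun u => rfl
  rcases lt_trichotomy b 0 with hb | hb | hb
  · -- strictly concave case
    set u0 := T.min' hne with hu0def
    set u1 := T.max' hne with hu1def
    have hqu0 : q u0 = c := (hmemT _).1 (T.min'_mem hne)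
    have hqu1 : q u1 = c := (hmemT _).1 (T.max'_mem hne)
    have h01 : (u0 : ℕ) ≤ (u1 : ℕ) := T.min'_le _ (T.max'_mem hne)
    have hbound : ∀ u, q u = c → (u0 : ℕ) ≤ (u : ℕ) ∧ (u : ℕ) ≤ (u1 : ℕ) := fun u hu =>
      ⟨T.min'_le _ ((hmemT u).2 hu), T.le_max' _ ((hmemT u).2 hu)⟩
    have hmid : (u1 : ℕ) ≤ (u0 : ℕ) + 1 := by
      by_contra hgt
      push_neg at hgt
      have hlt : (u0 : ℕ) + 1 < s := lt_trans hgt u1.isLt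
      have hqw : q ⟨(u0 : ℕ) + 1, hlt⟩ ≤ c := hle _
      set A : ℝ := ((u0 : ℕ) : ℝ) with hA
      set B : ℝ := ((u1 : ℕ) : ℝ) with hB
      have hAB : A + 1 < B := by rw [hA, hB]; exact_mod_cast hgt
      have hqwv : q ⟨(u0 : ℕ) + 1, hlt⟩ = a * (A + 1) + b * (A + 1) ^ 2 := by
        rw [hqval]; push_cast [hA]; ring
      have hq0 : a * A + b * A ^ 2 = c := by rw [← hqu0, hqval]
      have hq1 : a * B + b * B ^ 2 = c := by rw [← hqu1, hqval]
      have hD : (0 : ℝ) < B - A := by linarith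
      have hD1 : (0 : ℝ) < B - A - 1 := by linarith
      have h2 : (B - A) * (q ⟨(u0 : ℕ) + 1, hlt⟩) ≤ (B - A) * c :=
        mul_le_mul_of_nonneg_left hqw hD.le
      rw [hqwv] at h2
      have hident : (B - A) * (a * (A + 1) + b * (A + 1) ^ 2)
          = (B - A - 1) * (a * A + b * A ^ 2) + (a * B + b * B ^ 2)
            - b * (B - A) * (B - A - 1) := by ring
      rw [hident, hq0, hq1] at h2
      nlinarith [mul_pos (mul_pos (neg_pos.2 hb) hD) hD1]
    rcases eq_or_lt_of_le h01 with heq | hlt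
    · refine ⟨.inl u0, ?_⟩
      ext u
      rw [hmemT]
      simp only [realize, mem_singleton, Fin.ext_iff]
      constructor
      · intro hu
        obtain ⟨h1, h2⟩ := hbound u hu
        omega
      · intro hu
        have : u = u0 := Fin.ext hu
        rw [this]; exact hqu0
    · have hv : (u1 : ℕ) = (u0 : ℕ) + 1 := by omega
      have hw : (u0 : ℕ) < s - 1 := by have := u1.isLt; omega
      refine ⟨.inr (.inl (.inl ⟨(u0 : ℕ), hw⟩)), ?_⟩
      ext u
      rw [hmemT]
      simp only [realize, mem_insert, mem_singleton, Fin.ext_iff]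
      constructor
      · intro hu
        obtain ⟨h1, h2⟩ := hbound u hu
        omega
      · intro hu
        rcases hu with hu | hu
        · have : u = u0 := Fin.ext (by (try simp only [Fin.val_mk] at hu ⊢); omega)
          rw [this]; exact hqu0
        · have : u = u1 := Fin.ext (by (try simp only [Fin.val_mk] at hu ⊢); omega)
          rw [this]; exact hqu1
  · -- b = 0 : linear case
    rcases lt_trichotomy a 0 with ha | ha | ha
    · -- decreasing : argmax {0}
      have hcz : c = q ⟨0, by omega⟩ := by
        refine le_antisymm ?_ (hle _)
        rw [hcdef, humax]
        have : q umax ≤ q ⟨0, by omega⟩ := by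
          rw [hqval, hqval, hb]
          push_cast
          have : (0 : ℝ) ≤ ((umax : ℕ) : ℝ) := by positivity
          nlinarith
        exact this
      refine ⟨.inl ⟨0, by omega⟩, ?_⟩
      ext u
      rw [hmemT]
      simp only [realize, mem_singleton, Fin.ext_iff]
      constructor
      · intro hu
        by_contra h0
        have hpos : (0 : ℝ) < ((u : ℕ) : ℝ) := by
          have : 0 < (u : ℕ) := by omega
          exact_mod_cast this
        have : q u < q ⟨0, by omega⟩ := by
          rw [hqval, hqval, hb]
          push_cast
          nlinarith
        rw [hu, hcz] at this
        exact lt_irrefl _ this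
      · intro hu
        have : u = ⟨0, by omega⟩ := Fin.ext hu
        rw [this, ← hcz]
    · -- constant : argmax univ
      have hq0 : ∀ u, q u = 0 := fun u => by rw [hqval, hb, ha]; ring
      refine ⟨univLab s hs, ?_⟩
      rw [realize_univLab]
      apply eq_univ_of_forall
      intro u
      rw [hmemT, hq0, hcdef, humax, hq0]
    · -- increasing : argmax {s-1}
      have hcl : c = q ⟨s - 1, by omega⟩ := by
        refine le_antisymm ?_ (hle _)
        rw [hcdef, humax]
        rw [hqval, hqval, hb]
        push_cast
        have h1 : ((umax : ℕ) : ℝ) ≤ ((s - 1 : ℕ) : ℝ) := by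
          have := umax.isLt
          exact_mod_cast (by omega : (umax : ℕ) ≤ s - 1)
        nlinarith
      refine ⟨.inl ⟨s - 1, by omega⟩, ?_⟩
      ext u
      rw [hmemT]
      simp only [realize, mem_singleton, Fin.ext_iff]
      constructor
      · intro hu
        by_contra h0
        have hlt : ((u : ℕ) : ℝ) < ((s - 1 : ℕ) : ℝ) := by
          have := u.isLt
          exact_mod_cast (by omega : (u : ℕ) < s - 1)
        have : q u < q ⟨s - 1, by omega⟩ := by
          rw [hqval, hqval, hb]
          push_cast at hlt ⊢
          nlinarith
        rw [hu, hcl] at this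
        exact lt_irrefl _ this
      · intro hu
        have : u = ⟨s - 1, by omega⟩ := Fin.ext hu
        rw [this, ← hcl]
  · -- strictly convex case
    have hsub : ∀ u : Fin s, q u = c → (u : ℕ) = 0 ∨ (u : ℕ) = s - 1 := by
      intro u hu
      by_contra hcon
      push_neg at hcon
      obtain ⟨h1, h2⟩ := hcon
      have hv1 : 0 < (u : ℕ) := by omega
      have hv2 : (u : ℕ) < s - 1 := by have := u.isLt; omega
      set U : ℝ := ((u : ℕ) : ℝ) with hU
      set L : ℝ := ((s - 1 : ℕ) : ℝ) with hL
      have hULr : 0 < U := by rw [hU]; exact_mod_cast hv1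
      have hUL : U < L := by rw [hU, hL]; exact_mod_cast hv2
      have hq0 : q ⟨0, by omega⟩ = a * 0 + b * 0 ^ 2 := by rw [hqval]; norm_num
      have hqL : q ⟨s - 1, by omega⟩ = a * L + b * L ^ 2 := by rw [hqval]
      have hident : L * (a * U + b * U ^ 2)
          = (L - U) * (a * 0 + b * 0 ^ 2) + U * (a * L + b * L ^ 2)
            - b * U * (L - U) * L := by ring
      have hle0 : q ⟨0, by omega⟩ ≤ c := hle _
      have hleL : q ⟨s - 1, by omega⟩ ≤ c := hle _
      have hLpos : 0 < L := lt_trans hULr hUL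
      have hqu : a * U + b * U ^ 2 = c := by rw [← hu, hqval]
      have hposterm : 0 < b * U * (L - U) * L :=
        mul_pos (mul_pos (mul_pos hb hULr) (by linarith)) hLpos
      nlinarith [hq0, hqL]
    by_cases hzT : q ⟨0, by omega⟩ = c <;> by_cases hlT : q ⟨s - 1, by omega⟩ = c
    · by_cases h3 : 3 ≤ s
      · refine ⟨.inr (.inl (.inr ⟨h3⟩)), ?_⟩
        ext u
        rw [hmemT]
        simp only [realize, mem_insert, mem_singleton, Fin.ext_iff]
        constructor
        · intro hu
          have := hsub u hu
          (try simp only [Fin.val_mk])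
          omega
        · intro hu
          rcases hu with hu | hu
          · have : u = ⟨0, by omega⟩ := Fin.ext (by (try simp only [Fin.val_mk] at hu ⊢); omega)
            rw [this]; exact hzT
          · have : u = ⟨s - 1, by omega⟩ := Fin.ext (by (try simp only [Fin.val_mk] at hu ⊢); omega)
            rw [this]; exact hlT
      · have hs2 : s = 2 := by omega
        refine ⟨.inr (.inl (.inl ⟨0, by omega⟩)), ?_⟩
        ext u
        rw [hmemT]
        simp only [realize, mem_insert, mem_singleton, Fin.ext_iff]
        constructor
        · intro hu
          have := hsub u hu
          (try simp only [Fin.val_mk])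
          omega
        · intro hu
          rcases hu with hu | hu
          · have : u = ⟨0, by omega⟩ := Fin.ext (by (try simp only [Fin.val_mk] at hu ⊢); omega)
            rw [this]; exact hzT
          · have : u = ⟨s - 1, by omega⟩ := Fin.ext (by (try simp only [Fin.val_mk] at hu ⊢); omega)
            rw [this]; exact hlT
    · refine ⟨.inl ⟨0, by omega⟩, ?_⟩
      ext u
      rw [hmemT]
      simp only [realize, mem_singleton, Fin.ext_iff]
      constructor
      · intro hu
        rcases hsub u hu with h | h
        · (try simp only [Fin.val_mk]); omega
        · exfalso
          have : u = ⟨s - 1, by omega⟩ := Fin.ext (by (try simp only [Fin.val_mk] at h ⊢); omega)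
          rw [this] at hu
          exact hlT hu
      · intro hu
        have : u = ⟨0, by omega⟩ := Fin.ext hu
        rw [this]; exact hzT
    · refine ⟨.inl ⟨s - 1, by omega⟩, ?_⟩
      ext u
      rw [hmemT]
      simp only [realize, mem_singleton, Fin.ext_iff]
      constructor
      · intro hu
        rcases hsub u hu with h | h
        · exfalso
          have : u = ⟨0, by omega⟩ := Fin.ext (by (try simp only [Fin.val_mk] at h ⊢); omega)
          rw [this] at hu
          exact hzT hu
        · (try simp only [Fin.val_mk]); omega
      · intro hu
        have : u = ⟨s - 1, by omega⟩ := Fin.ext hu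
        rw [this]; exact hlT
    · exfalso
      obtain ⟨u, hu⟩ := hne
      rcases hsub u ((hmemT u).1 hu) with h | h
      · have : u = ⟨0, by omega⟩ := Fin.ext (by (try simp only [Fin.val_mk] at h ⊢); omega)
        rw [this] at hu
        exact hzT ((hmemT _).1 hu)
      · have : u = ⟨s - 1, by omega⟩ := Fin.ext (by (try simp only [Fin.val_mk] at h ⊢); omega)
        rw [this] at hu
        exact hlT ((hmemT _).1 hu)

/-! ### Label counting -/

lemma cardPLift (p : Prop) [Decidable p] : Fintype.card (PLift p) = if p then 1 else 0 := by
  split_ifs with h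
  · haveI : Unique (PLift p) := ⟨⟨⟨h⟩⟩, fun a => rfl⟩
    exact Fintype.card_unique
  · haveI : IsEmpty (PLift p) := ⟨fun a => h a.down⟩
    exact Fintype.card_eq_zero

/-- number of labels of a given dimension -/
def labCnt (s j : ℕ) : ℕ :=
  if j = 0 then s else if j = 1 then s - 1 + (if 3 ≤ s then 1 else 0)
  else if j = 2 then (if 3 ≤ s then 1 else 0) else 0

lemma card_filter_dl (s j : ℕ) :
    ((univ : Finset (Lab s)).filter (fun l => dl l = j)).card = labCnt s j := by
  match j with
  | 0 =>
    have himg : (univ : Finset (Lab s)).filter (fun l => dl l = 0) =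
        (univ : Finset (Fin s)).image (β := Lab s) (Sum.inl) := by
      ext l
      simp only [mem_filter, mem_univ, true_and, mem_image]
      constructor
      · intro hl
        rcases l with u | (u | h) | h
        · exact ⟨u, rfl⟩
        · exact absurd hl (by simp [dl])
        · exact absurd hl (by simp [dl])
        · exact absurd hl (by simp [dl])
      · rintro ⟨u, rfl⟩; rfl
    rw [himg, card_image_of_injective _ Sum.inl_injective, card_univ, Fintype.card_fin]
    rfl
  | 1 =>
    have himg : (univ : Finset (Lab s)).filter (fun l => dl l = 1) =
        (univ : Finset (Fin (s - 1) ⊕ PLift (3 ≤ s))).image (β := Lab s) (fun x => Sum.inr (Sum.inl x)) := by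
      ext l
      simp only [mem_filter, mem_univ, true_and, mem_image]
      constructor
      · intro hl
        rcases l with u | (u | h) | h
        · exact absurd hl (by simp [dl])
        · exact ⟨Sum.inl u, rfl⟩
        · exact ⟨Sum.inr h, rfl⟩
        · exact absurd hl (by simp [dl])
      · rintro ⟨u, rfl⟩
        rcases u with u | h <;> rfl
    rw [himg, card_image_of_injective _
      (fun x y hxy => Sum.inl_injective (Sum.inr_injective hxy)), card_univ, Fintype.card_sum,
      Fintype.card_fin, cardPLift]
    rfl
  | 2 =>
    have himg : (univ : Finset (Lab s)).filter (fun l => dl l = 2) =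
        (univ : Finset (PLift (3 ≤ s))).image (β := Lab s) (fun x => Sum.inr (Sum.inr x)) := by
      ext l
      simp only [mem_filter, mem_univ, true_and, mem_image]
      constructor
      · intro hl
        rcases l with u | (u | h) | h
        · exact absurd hl (by simp [dl])
        · exact absurd hl (by simp [dl])
        · exact absurd hl (by simp [dl])
        · exact ⟨h, rfl⟩
      · rintro ⟨u, rfl⟩; rfl
    rw [himg, card_image_of_injective _
      (fun x y hxy => Sum.inr_injective (Sum.inr_injective hxy)), card_univ, cardPLift]
    rfl
  | (j + 3) =>
    have hempty : (univ : Finset (Lab s)).filter (fun l => dl l = j + 3) = ∅ := by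
      exact filter_false_of_mem (fun l _ => by have := dl_le l; omega)
    rw [hempty]
    simp [labCnt]

lemma card_Lab (s : ℕ) (hs : 2 ≤ s) : Fintype.card (Lab s) ≤ 3 * s := by
  have : Fintype.card (Lab s) = s + ((s - 1) + (if 3 ≤ s then 1 else 0))
      + (if 3 ≤ s then 1 else 0) := by
    show Fintype.card (Fin s ⊕ (Fin (s - 1) ⊕ PLift (3 ≤ s)) ⊕ PLift (3 ≤ s)) = _
    rw [Fintype.card_sum, Fintype.card_fin, Fintype.card_sum, Fintype.card_sum,
      Fintype.card_fin, cardPLift]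
    split_ifs <;> omega
  rw [this]
  split_ifs <;> omega

/-! ### The model polytope: a product of parabola polygons -/

variable {M : ℕ}

def pidx (p : Fin M × Fin 2) : Fin (M * 2) := finProdFinEquiv p

lemma pidx_injective : Function.Injective (pidx (M := M)) := finProdFinEquiv.injective

/-- Coordinate functional on `Euc (M*2)` indexed by a block index and a position. -/
def coordL (i : Fin M) (j : Fin 2) : Euc (M * 2) →ₗ[ℝ] ℝ :=
  (LinearMap.proj (pidx (i, j))).comp (WithLp.linearEquiv 2 ℝ (∀ _ : Fin (M * 2), ℝ)).toLinearMap

lemma coordL_apply (i : Fin M) (j : Fin 2) (x : Euc (M * 2)) :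
    coordL i j x = x (pidx (i, j)) := rfl

lemma coordL_single (i : Fin M) (j : Fin 2) (p : Fin (M * 2)) (y : ℝ) :
    coordL i j (EuclideanSpace.single p y) = if pidx (i, j) = p then y else 0 := by
  rw [coordL_apply, EuclideanSpace.single_apply]

/-- The injection of `ℝ × ℝ` as the `i`-th block. -/
def bvecL (i : Fin M) : (ℝ × ℝ) →ₗ[ℝ] Euc (M * 2) where
  toFun v := v.1 • EuclideanSpace.single (pidx (i, 0)) (1 : ℝ)
    + v.2 • EuclideanSpace.single (pidx (i, 1)) (1 : ℝ)
  map_add' v w := by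
    simp only [Prod.fst_add, Prod.snd_add, add_smul]
    abel
  map_smul' c v := by
    simp only [Prod.smul_fst, Prod.smul_snd, smul_eq_mul, RingHom.id_apply, smul_add,
      mul_smul]

lemma coordL_bvecL (i' i : Fin M) (j' : Fin 2) (v : ℝ × ℝ) :
    coordL i' j' (bvecL i v) = if i' = i then (if j' = 0 then v.1 else v.2) else 0 := by
  have h : coordL i' j' (bvecL i v)
      = v.1 * (if pidx (i', j') = pidx (i, 0) then (1:ℝ) else 0)
        + v.2 * (if pidx (i', j') = pidx (i, 1) then (1:ℝ) else 0) := by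
    show coordL i' j' (v.1 • EuclideanSpace.single (pidx (i, 0)) (1 : ℝ)
      + v.2 • EuclideanSpace.single (pidx (i, 1)) (1 : ℝ)) = _
    rw [map_add, map_smul, map_smul, coordL_single, coordL_single, smul_eq_mul, smul_eq_mul]
  rw [h]
  have hiff : ∀ (j'' : Fin 2), pidx (i', j') = pidx (i, j'') ↔ (i' = i ∧ j' = j'') := by
    intro j''
    constructor
    · intro he
      have := pidx_injective he
      exact ⟨congrArg Prod.fst this, congrArg Prod.snd this⟩
    · rintro ⟨rfl, rfl⟩; rfl
  have e0 : (pidx (i', j') = pidx (i, 0)) ↔ (i' = i ∧ j' = 0) := hiff 0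
  have e1 : (pidx (i', j') = pidx (i, 1)) ↔ (i' = i ∧ j' = 1) := hiff 1
  by_cases hi : i' = i
  · subst hi
    by_cases hj : j' = 0
    · subst hj
      rw [if_pos (e0.2 ⟨rfl, rfl⟩), if_neg (fun hc => absurd (e1.1 hc).2 (by decide)),
        if_pos rfl, if_pos rfl]
      ring
    · have hj1 : j' = 1 := by fin_cases j' <;> simp_all
      subst hj1
      rw [if_neg (fun hc => absurd (e0.1 hc).2 (by decide)), if_pos (e1.2 ⟨rfl, rfl⟩),
        if_pos rfl, if_neg (by decide)]
      ring
  · rw [if_neg (fun hc => hi (e0.1 hc).1), if_neg (fun hc => hi (e1.1 hc).1), if_neg hi]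
    ring

variable (sz : Fin M → ℕ)

/-- Vertex of the product polytope indexed by a choice in each factor. -/
def Phi (t : ∀ i, Fin (sz i)) : Euc (M * 2) := ∑ i, bvecL i (pd (t i))

lemma coordL_Phi (t : ∀ i, Fin (sz i)) (i : Fin M) (j : Fin 2) :
    coordL i j (Phi sz t) = if j = 0 then ((t i : ℕ) : ℝ) else ((t i : ℕ) : ℝ) ^ 2 := by
  rw [Phi, map_sum, Finset.sum_eq_single i]
  · rw [coordL_bvecL, if_pos rfl]
    rfl
  · intro i' _ hne
    rw [coordL_bvecL, if_neg (Ne.symm hne)]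
  · intro h
    exact absurd (mem_univ i) h

lemma Phi_injective : Function.Injective (Phi sz) := by
  intro t t' he
  funext i
  have h := congrArg (coordL i 0) he
  rw [coordL_Phi, coordL_Phi, if_pos rfl, if_pos rfl] at h
  exact Fin.ext (Nat.cast_injective h)

/-- The vertex set as a finset. -/
def Vx : Finset (Euc (M * 2)) := univ.image (Phi sz)

/-- The product polytope. -/
def Pl : Set (Euc (M * 2)) := convexHull ℝ (Vx sz : Set (Euc (M * 2)))

lemma isPolytope_Pl : IsPolytope (Pl sz) := ⟨Vx sz, rfl⟩

/-- Per-factor quadratic associated to a linear functional. -/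
def qf (f : Euc (M * 2) →L[ℝ] ℝ) (i : Fin M) (u : Fin (sz i)) : ℝ := f (bvecL i (pd u))

lemma f_Phi (f : Euc (M * 2) →L[ℝ] ℝ) (t : ∀ i, Fin (sz i)) :
    f (Phi sz t) = ∑ i, qf sz f i (t i) := by
  rw [Phi, map_sum]
  rfl

lemma qf_quad (f : Euc (M * 2) →L[ℝ] ℝ) (i : Fin M) (u : Fin (sz i)) :
    qf sz f i u = (f (bvecL i (1, 0))) * ((u : ℕ) : ℝ)
      + (f (bvecL i (0, 1))) * ((u : ℕ) : ℝ) ^ 2 := by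
  have hpd : pd u = ((u : ℕ) : ℝ) • ((1 : ℝ), (0 : ℝ))
      + ((u : ℕ) : ℝ) ^ 2 • ((0 : ℝ), (1 : ℝ)) := by
    simp [pd, Prod.ext_iff]
  rw [qf, hpd, map_add, map_smul, map_add, map_smul, map_smul, map_smul]
  simp [mul_comm]

variable (hsz : ∀ i, 2 ≤ sz i)

/-- Maximum of the per-factor quadratic. -/
def cmax (f : Euc (M * 2) →L[ℝ] ℝ) (i : Fin M) : ℝ :=
  (univ : Finset (Fin (sz i))).sup'
    ⟨⟨0, by have := hsz i; omega⟩, mem_univ _⟩ (qf sz f i)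

lemma qf_le_cmax (f : Euc (M * 2) →L[ℝ] ℝ) (i : Fin M) (u : Fin (sz i)) :
    qf sz f i u ≤ cmax sz hsz f i := le_sup' _ (mem_univ u)

lemma vertex_le (f : Euc (M * 2) →L[ℝ] ℝ) (t : ∀ i, Fin (sz i)) :
    f (Phi sz t) ≤ ∑ i, cmax sz hsz f i := by
  rw [f_Phi]
  exact Finset.sum_le_sum (fun i _ => qf_le_cmax sz hsz f i (t i))

lemma poly_le (f : Euc (M * 2) →L[ℝ] ℝ) :
    ∀ x ∈ Pl sz, f x ≤ ∑ i, cmax sz hsz f i := by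
  intro x hx
  have hcvx : Convex ℝ {y : Euc (M * 2) | f y ≤ ∑ i, cmax sz hsz f i} :=
    convex_halfSpace_le ⟨map_add f, map_smul f⟩ _
  have hsub : (Vx sz : Set (Euc (M * 2))) ⊆ {y | f y ≤ ∑ i, cmax sz hsz f i} := by
    rintro y hy
    rw [Finset.mem_coe, Vx, Finset.mem_image] at hy
    obtain ⟨t, -, rfl⟩ := hy
    exact vertex_le sz hsz f t
  exact convexHull_min hsub hcvx hx

lemma exists_vertex_max (f : Euc (M * 2) →L[ℝ] ℝ) :
    ∃ t : ∀ i, Fin (sz i), ∀ i, qf sz f i (t i) = cmax sz hsz f i := by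
  have h : ∀ i, ∃ u : Fin (sz i), qf sz f i u = cmax sz hsz f i := by
    intro i
    obtain ⟨u, -, hu⟩ := exists_mem_eq_sup'
      (⟨⟨0, by have := hsz i; omega⟩, mem_univ _⟩ : (univ : Finset (Fin (sz i))).Nonempty)
      (qf sz f i)
    exact ⟨u, hu.symm⟩
  exact ⟨fun i => (h i).choose, fun i => (h i).choose_spec⟩

lemma cval (f : Euc (M * 2) →L[ℝ] ℝ) (c : ℝ) (hb : ∀ x ∈ Pl sz, f x ≤ c)
    (hat : ∃ x ∈ Pl sz, f x = c) : c = ∑ i, cmax sz hsz f i := by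
  obtain ⟨x, hx, hxc⟩ := hat
  refine le_antisymm ?_ ?_
  · rw [← hxc]
    exact poly_le sz hsz f x hx
  · obtain ⟨t, ht⟩ := exists_vertex_max sz hsz f
    have h1 : f (Phi sz t) = ∑ i, cmax sz hsz f i := by
      rw [f_Phi]
      exact Finset.sum_congr rfl (fun i _ => ht i)
    rw [← h1]
    apply hb
    apply subset_convexHull
    rw [Finset.mem_coe, Vx, Finset.mem_image]
    exact ⟨t, mem_univ _, rfl⟩

lemma slice_hull (f : Euc (M * 2) →L[ℝ] ℝ) :
    {x ∈ Pl sz | f x = ∑ i, cmax sz hsz f i} =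
      convexHull ℝ (Phi sz '' Set.pi Set.univ
        (fun i => {u | qf sz f i u = cmax sz hsz f i})) := by
  set c := ∑ i, cmax sz hsz f i with hc
  set A := Phi sz '' Set.pi Set.univ (fun i => {u | qf sz f i u = cmax sz hsz f i}) with hA
  apply Set.Subset.antisymm
  · rintro x ⟨hxP, hxc⟩
    rw [Pl, Finset.convexHull_eq] at hxP
    obtain ⟨w, hw0, hw1, hwx⟩ := hxP
    have hxe : x = ∑ v ∈ Vx sz, w v • v := by
      rw [← hwx, Finset.centerMass_eq_of_sum_1 _ id hw1]
      simp only [id]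
    have hfx : f x = ∑ v ∈ Vx sz, w v * f v := by
      rw [hxe, map_sum]
      exact Finset.sum_congr rfl (fun v _ => by rw [map_smul, smul_eq_mul])
    have hvle : ∀ v ∈ Vx sz, f v ≤ c := by
      intro v hv
      rw [Vx, mem_image] at hv
      obtain ⟨t, -, rfl⟩ := hv
      exact vertex_le sz hsz f t
    have hsum0 : ∑ v ∈ Vx sz, w v * (c - f v) = 0 := by
      have h1 : ∑ v ∈ Vx sz, w v * (c - f v)
          = c * (∑ v ∈ Vx sz, w v) - ∑ v ∈ Vx sz, w v * f v := by
        rw [Finset.mul_sum, ← Finset.sum_sub_distrib]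
        exact Finset.sum_congr rfl (fun v _ => by ring)
      rw [h1, hw1, ← hfx, hxc]
      ring
    have hzero : ∀ v ∈ Vx sz, w v * (c - f v) = 0 :=
      fun v hv => (Finset.sum_eq_zero_iff_of_nonneg
        (fun v hv => mul_nonneg (hw0 v hv) (sub_nonneg.2 (hvle v hv)))).1 hsum0 v hv
    set S := (Vx sz).filter (fun v => f v = c) with hS
    have hwS : ∀ v ∈ Vx sz, v ∉ S → w v = 0 := by
      intro v hv hvs
      have hne' : ¬ (f v = c) := by
        intro hfc
        exact hvs (mem_filter.2 ⟨hv, hfc⟩)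
      rcases mul_eq_zero.1 (hzero v hv) with h | h
      · exact h
      · exact absurd (by linarith [sub_eq_zero.1 h] : f v = c) hne'
    have hsum1 : ∑ v ∈ S, w v = 1 := by
      rw [← hw1]
      apply Finset.sum_subset (filter_subset _ _)
      intro v hv hvs
      exact hwS v hv hvs
    have hxeS : x = ∑ v ∈ S, w v • v := by
      rw [hxe]
      symm
      apply Finset.sum_subset (filter_subset _ _)
      intro v hv hvs
      rw [hwS v hv hvs, zero_smul]
    have hxS : x ∈ convexHull ℝ (S : Set (Euc (M * 2))) := by
      rw [Finset.convexHull_eq]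
      refine ⟨w, fun y hy => hw0 y (filter_subset _ _ hy), hsum1, ?_⟩
      rw [Finset.centerMass_eq_of_sum_1 _ id hsum1]
      simp only [id]
      exact hxeS.symm
    have hSA : (S : Set (Euc (M * 2))) ⊆ A := by
      intro v hv
      rw [Finset.mem_coe, hS, mem_filter] at hv
      obtain ⟨hv1, hv2⟩ := hv
      rw [Vx, mem_image] at hv1
      obtain ⟨t, -, rfl⟩ := hv1
      refine ⟨t, ?_, rfl⟩
      intro i _
      show qf sz f i (t i) = cmax sz hsz f i
      by_contra hq
      have hlt : qf sz f i (t i) < cmax sz hsz f i :=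
        lt_of_le_of_ne (qf_le_cmax sz hsz f i (t i)) hq
      have hstrict : f (Phi sz t) < c := by
        rw [f_Phi, hc]
        exact Finset.sum_lt_sum (fun i' _ => qf_le_cmax sz hsz f i' (t i'))
          ⟨i, mem_univ i, hlt⟩
      rw [hv2] at hstrict
      exact lt_irrefl _ hstrict
    exact convexHull_mono hSA hxS
  · have hsub : A ⊆ {x ∈ Pl sz | f x = c} := by
      rintro y ⟨t, ht, rfl⟩
      constructor
      · apply subset_convexHull
        rw [Finset.mem_coe, Vx, mem_image]
        exact ⟨t, mem_univ _, rfl⟩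
      · rw [f_Phi, hc]
        exact Finset.sum_congr rfl (fun i _ => ht i (Set.mem_univ i))
    have hcvx : Convex ℝ {x ∈ Pl sz | f x = c} := by
      have h1 : Convex ℝ (Pl sz) := convex_convexHull ℝ _
      have h2 : Convex ℝ {x : Euc (M * 2) | f x = c} :=
        convex_hyperplane ⟨map_add f, map_smul f⟩ c
      exact h1.inter h2
    exact convexHull_min hsub hcvx

include hsz in
lemma face_rep (G : Set (Euc (M * 2))) (hf : IsFace (Pl sz) G) (hne : G.Nonempty) :
    ∃ l : ∀ i, Lab (sz i),
      G = convexHull ℝ (Phi sz '' Set.pi Set.univ (fun i => ↑(realize (l i)))) := by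
  rcases hf with hP | hE | ⟨f, -, c, hb, hGdef⟩
  · refine ⟨fun i => univLab (sz i) (hsz i), ?_⟩
    rw [hP]
    have hpi : Set.pi Set.univ
        (fun i => (↑(realize (univLab (sz i) (hsz i))) : Set (Fin (sz i)))) = Set.univ := by
      apply Set.eq_univ_iff_forall.2
      intro t
      intro i _
      show t i ∈ (↑(realize (univLab (sz i) (hsz i))) : Set (Fin (sz i)))
      rw [realize_univLab]
      simp
    rw [hpi, Set.image_univ, Pl, Vx]
    congr 1
    rw [Finset.coe_image, Finset.coe_univ, Set.image_univ]
  · rw [hE] at hne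
    exact absurd hne Set.not_nonempty_empty
  · have hat : ∃ x ∈ Pl sz, f x = c := by
      obtain ⟨x, hx⟩ := hne
      rw [hGdef] at hx
      exact ⟨x, hx.1, hx.2⟩
    have hcv := cval sz hsz f c hb hat
    have hcl : ∀ i, ∃ l : Lab (sz i),
        {u : Fin (sz i) | qf sz f i u = cmax sz hsz f i} = ↑(realize l) := by
      intro i
      obtain ⟨l, hl⟩ := classify (sz i) (hsz i) (f (bvecL i (1, 0))) (f (bvecL i (0, 1)))
      refine ⟨l, ?_⟩
      have hfun : (fun u : Fin (sz i) => f (bvecL i (1, 0)) * ((u : ℕ) : ℝ)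
          + f (bvecL i (0, 1)) * ((u : ℕ) : ℝ) ^ 2) = qf sz f i := by
        funext u
        rw [qf_quad]
      rw [← hl]
      ext u
      simp only [Set.mem_setOf_eq, Finset.coe_filter, mem_univ, true_and]
      rw [qf_quad sz f i u, hfun]
      exact Iff.rfl
    choose l hl using hcl
    refine ⟨l, ?_⟩
    rw [hGdef, hcv, slice_hull sz hsz f,
      show (fun i => {u : Fin (sz i) | qf sz f i u = cmax sz hsz f i})
        = (fun i => (↑(realize (l i)) : Set (Fin (sz i)))) from funext fun i => hl i]

include hsz in
lemma dim_hull (l : ∀ i, Lab (sz i)) :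
    dimSet (convexHull ℝ (Phi sz '' Set.pi Set.univ (fun i => ↑(realize (l i)))))
      = ∑ i, dl (l i) := by
  set T : Set (∀ i, Fin (sz i)) := Set.pi Set.univ (fun i => ↑(realize (l i))) with hT
  have hne : ∀ i, ∃ u, u ∈ realize (l i) := fun i => realize_nonempty (hsz i) (l i)
  set t0 : ∀ i, Fin (sz i) := fun i => (hne i).choose with ht0
  have ht0T : t0 ∈ T := fun i _ => (hne i).choose_spec
  set g : (Σ i : Fin M, Fin (dl (l i))) → Euc (M * 2) :=
    fun x => bvecL x.1 (vecs (l x.1) x.2) with hg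
  rw [dimSet, affineSpan_convexHull, direction_affineSpan]
  have hgen_mem : ∀ x, g x ∈ vectorSpan ℝ (Phi sz '' T) := by
    rintro ⟨i, r⟩
    obtain ⟨u, hu, v, hv, huv⟩ := vecs_diff (hsz i) (l i) r
    have hmem : ∀ w : Fin (sz i), w ∈ realize (l i) →
        Phi sz (Function.update t0 i w) ∈ Phi sz '' T := by
      intro w hw
      refine ⟨Function.update t0 i w, ?_, rfl⟩
      intro i' _
      by_cases hii : i' = i
      · subst hii
        rw [Function.update_self]
        exact hw
      · rw [Function.update_of_ne hii]
        exact ht0T i' trivial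
    have hdiff : Phi sz (Function.update t0 i u) - Phi sz (Function.update t0 i v)
        = bvecL i (pd u - pd v) := by
      rw [Phi, Phi, ← Finset.sum_sub_distrib, Finset.sum_eq_single i]
      · rw [Function.update_self, Function.update_self, ← map_sub]
      · intro i' _ hii
        rw [Function.update_of_ne hii, Function.update_of_ne hii, sub_self]
      · exact fun h => absurd (mem_univ i) h
    have hgx : g ⟨i, r⟩ = Phi sz (Function.update t0 i u) - Phi sz (Function.update t0 i v) := by
      rw [hdiff, huv]
    rw [hgx, ← vsub_eq_sub]
    exact vsub_mem_vectorSpan ℝ (hmem u hu) (hmem v hv)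
  have hspan_le : vectorSpan ℝ (Phi sz '' T) ≤ Submodule.span ℝ (Set.range g) := by
    rw [vectorSpan_def]
    apply Submodule.span_le.2
    rintro z hz
    rw [Set.mem_vsub] at hz
    obtain ⟨x, hx, y, hy, rfl⟩ := hz
    obtain ⟨t, ht, rfl⟩ := hx
    obtain ⟨t', ht', rfl⟩ := hy
    rw [vsub_eq_sub]
    have hdiff : Phi sz t - Phi sz t' = ∑ i, bvecL i (pd (t i) - pd (t' i)) := by
      rw [Phi, Phi, ← Finset.sum_sub_distrib]
      exact Finset.sum_congr rfl (fun i _ => (map_sub _ _ _).symm)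
    rw [hdiff]
    apply Submodule.sum_mem
    intro i _
    have h1 : pd (t i) - pd (t' i) ∈ Submodule.span ℝ (Set.range (vecs (l i))) :=
      vecs_span (l i) (ht i trivial) (ht' i trivial)
    have h3 : bvecL i (pd (t i) - pd (t' i)) ∈
        Submodule.span ℝ (bvecL i '' Set.range (vecs (l i))) := by
      rw [← Submodule.map_span]
      exact Submodule.mem_map_of_mem h1
    refine Submodule.span_mono ?_ h3
    rintro z ⟨w, ⟨r, rfl⟩, rfl⟩
    exact ⟨⟨i, r⟩, rfl⟩
  have hindep : LinearIndependent ℝ g := by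
    rw [Fintype.linearIndependent_iff]
    intro co hco x
    obtain ⟨i, r⟩ := x
    have hcoord : ∀ j : Fin 2, (∑ r' : Fin (dl (l i)), co ⟨i, r'⟩ •
        (vecs (l i) r')) = (0 : ℝ × ℝ) →  True := fun _ _ => trivial
    have hblock : (∑ r' : Fin (dl (l i)), co ⟨i, r'⟩ • vecs (l i) r') = (0 : ℝ × ℝ) := by
      have hcomp : ∀ j : Fin 2,
          (∑ r' : Fin (dl (l i)), co ⟨i, r'⟩ * (if j = 0 then (vecs (l i) r').1
            else (vecs (l i) r').2)) = 0 := by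
        intro j
        have h0 : coordL i j (∑ x : Σ i', Fin (dl (l i')), co x • g x) = 0 := by
          rw [hco, map_zero]
        rw [map_sum] at h0
        have h1 : (∑ x : Σ i', Fin (dl (l i')), co x * coordL i j (g x)) = 0 := by
          rw [← h0]
          exact Finset.sum_congr rfl (fun x _ => by rw [map_smul, smul_eq_mul])
        rw [← h1, ← Finset.univ_sigma_univ, Finset.sum_sigma, Finset.sum_eq_single i]
        · apply Finset.sum_congr rfl
          intro r' _
          rw [hg]
          rw [coordL_bvecL, if_pos rfl]
        · intro i' _ hii
          apply Finset.sum_eq_zero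
          intro r' _
          rw [hg, coordL_bvecL, if_neg (Ne.symm hii), mul_zero]
        · exact fun h => absurd (mem_univ i) h
      have hfst : (∑ r' : Fin (dl (l i)), co ⟨i, r'⟩ * (vecs (l i) r').1) = 0 := by
        have h := hcomp 0
        simpa using h
      have hsnd : (∑ r' : Fin (dl (l i)), co ⟨i, r'⟩ * (vecs (l i) r').2) = 0 := by
        have h := hcomp 1
        simpa using h
      apply Prod.ext
      · rw [Prod.fst_sum]
        simpa [Prod.smul_fst] using hfst
      · rw [Prod.snd_sum]
        simpa [Prod.smul_snd] using hsnd
    exact (Fintype.linearIndependent_iff.1 (vecs_indep (l i))) (fun r' => co ⟨i, r'⟩) hblock r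
  have hcard : Fintype.card (Σ i : Fin M, Fin (dl (l i))) = ∑ i, dl (l i) := by
    rw [Fintype.card_sigma]
    exact Finset.sum_congr rfl (fun i _ => Fintype.card_fin _)
  have hrank := finrank_span_eq_card hindep
  refine le_antisymm ?_ ?_
  · calc Module.finrank ℝ (vectorSpan ℝ (Phi sz '' T))
        ≤ Module.finrank ℝ (Submodule.span ℝ (Set.range g)) := Submodule.finrank_mono hspan_le
      _ = ∑ i, dl (l i) := by rw [hrank, hcard]
  · have h2 : Submodule.span ℝ (Set.range g) ≤ vectorSpan ℝ (Phi sz '' T) :=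
      Submodule.span_le.2 (by rintro z ⟨x, rfl⟩; exact hgen_mem x)
    calc (∑ i, dl (l i)) = Module.finrank ℝ (Submodule.span ℝ (Set.range g)) := by
          rw [hrank, hcard]
      _ ≤ Module.finrank ℝ (vectorSpan ℝ (Phi sz '' T)) := Submodule.finrank_mono h2

include hsz in
lemma zero_face (hM : 1 ≤ M) (t : ∀ i, Fin (sz i)) :
    IsKFace (Pl sz) 0 {Phi sz t} := by
  classical
  set fl : Euc (M * 2) →ₗ[ℝ] ℝ :=
    ∑ i, ((2 * ((t i : ℕ) : ℝ)) • coordL i 0 - coordL i 1) with hfl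
  set f : Euc (M * 2) →L[ℝ] ℝ := LinearMap.toContinuousLinearMap fl with hf
  have hfapp : ∀ x, f x = ∑ i, (2 * ((t i : ℕ) : ℝ) * coordL i 0 x - coordL i 1 x) := by
    intro x
    show fl x = _
    rw [hfl, LinearMap.sum_apply]
    exact Finset.sum_congr rfl (fun i _ => by
      rw [LinearMap.sub_apply, LinearMap.smul_apply, smul_eq_mul])
  have hq : ∀ i (u : Fin (sz i)), qf sz f i u
      = 2 * ((t i : ℕ) : ℝ) * ((u : ℕ) : ℝ) - ((u : ℕ) : ℝ) ^ 2 := by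
    intro i u
    rw [qf, hfapp, Finset.sum_eq_single i]
    · rw [coordL_bvecL, coordL_bvecL, if_pos rfl, if_pos rfl, if_pos rfl,
        if_neg (by decide : (1 : Fin 2) ≠ 0)]
      show 2 * ((t i : ℕ) : ℝ) * ((u : ℕ) : ℝ) - ((u : ℕ) : ℝ) ^ 2 = _
      ring
    · intro i' _ hii
      rw [coordL_bvecL, coordL_bvecL, if_neg hii, if_neg hii]
      ring
    · exact fun h => absurd (mem_univ i) h
  have hqmax : ∀ i, cmax sz hsz f i = qf sz f i (t i) := by
    intro i
    refine le_antisymm (sup'_le _ _ fun u _ => ?_) (qf_le_cmax sz hsz f i (t i))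
    rw [hq, hq]
    nlinarith [sq_nonneg (((u : ℕ) : ℝ) - ((t i : ℕ) : ℝ))]
  have hargmax : ∀ i, {u : Fin (sz i) | qf sz f i u = cmax sz hsz f i}
      = ({t i} : Set (Fin (sz i))) := by
    intro i
    ext u
    simp only [Set.mem_setOf_eq, Set.mem_singleton_iff]
    rw [hqmax i, hq, hq]
    constructor
    · intro he
      have hcast : ((u : ℕ) : ℝ) = ((t i : ℕ) : ℝ) := by
        nlinarith [sq_nonneg (((u : ℕ) : ℝ) - ((t i : ℕ) : ℝ))]
      exact Fin.ext (Nat.cast_injective hcast)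
    · rintro rfl
      rfl
  have hslice := slice_hull sz hsz f
  have hsingle : Phi sz '' Set.pi Set.univ
      (fun i => {u | qf sz f i u = cmax sz hsz f i}) = {Phi sz t} := by
    rw [show (fun i => {u : Fin (sz i) | qf sz f i u = cmax sz hsz f i})
        = (fun i => ({t i} : Set (Fin (sz i)))) from funext hargmax,
      Set.univ_pi_singleton, Set.image_singleton]
  rw [hsingle, convexHull_singleton] at hslice
  refine ⟨Or.inr (Or.inr ⟨f, ?_, ∑ i, cmax sz hsz f i, poly_le sz hsz f, hslice.symm⟩),
    Set.singleton_nonempty _, ?_⟩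
  · intro hf0
    have h1 : f (bvecL ⟨0, hM⟩ (0, 1)) = -1 := by
      rw [hfapp, Finset.sum_eq_single (⟨0, hM⟩ : Fin M)]
      · rw [coordL_bvecL, coordL_bvecL, if_pos rfl, if_pos rfl, if_pos rfl,
          if_neg (by decide : (1 : Fin 2) ≠ 0)]
        ring
      · intro i' _ hii
        rw [coordL_bvecL, coordL_bvecL, if_neg hii, if_neg hii]
        ring
      · exact fun h => absurd (mem_univ _) h
    rw [hf0] at h1
    simp at h1
  · rw [dimSet, direction_affineSpan, vectorSpan_singleton]
    exact finrank_bot ℝ _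

/-! ### Counting faces -/

/-- The finset of label tuples of total dimension `k`. -/
def TT (k : ℕ) : Finset (∀ i, Lab (sz i)) := univ.filter (fun l => ∑ i, dl (l i) = k)

include hsz in
lemma fVec_le (k : ℕ) :
    fVec (Pl sz) k ≤ (TT sz k).card ∧ {G | IsKFace (Pl sz) k G}.Finite := by
  classical
  haveI : Nonempty (∀ i, Lab (sz i)) := ⟨fun i => univLab _ (hsz i)⟩
  set Pr : Set (Euc (M * 2)) → Prop := fun G => ∃ l : ∀ i, Lab (sz i),
      G = convexHull ℝ (Phi sz '' Set.pi Set.univ (fun i => ↑(realize (l i)))) with hPr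
  set J : Set (Euc (M * 2)) → (∀ i, Lab (sz i)) := fun G =>
    if h : Pr G then h.choose else Classical.arbitrary _ with hJ
  have hspec : ∀ G, IsKFace (Pl sz) k G →
      G = convexHull ℝ (Phi sz '' Set.pi Set.univ (fun i => ↑(realize (J G i)))) := by
    intro G hG
    have h : Pr G := face_rep sz hsz G hG.1 hG.2.1
    have he : J G = h.choose := by rw [hJ]; exact dif_pos h
    rw [he]
    exact h.choose_spec
  have hmap : ∀ G ∈ {G | IsKFace (Pl sz) k G},
      J G ∈ ((TT sz k) : Set (∀ i, Lab (sz i))) := by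
    intro G hG
    have hdim : dimSet G = k := hG.2.2
    rw [hspec G hG, dim_hull sz hsz] at hdim
    simp only [TT, Finset.coe_filter, Set.mem_setOf_eq, mem_univ, true_and]
    exact hdim
  have hinj : Set.InjOn J {G | IsKFace (Pl sz) k G} := by
    intro G hG G' hG' he
    rw [hspec G hG, hspec G' hG', he]
  constructor
  · rw [fVec, ← Set.ncard_coe_finset]
    exact Set.ncard_le_ncard_of_injOn J hmap hinj (Finset.finite_toSet _)
  · exact Set.Finite.of_finite_image (Set.toFinite _) hinj

include hsz in
lemma f0_ge (hM : 1 ≤ M) : (∏ i, sz i) ≤ fVec (Pl sz) 0 := by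
  classical
  have hsub : (fun t => ({Phi sz t} : Set (Euc (M * 2)))) '' Set.univ
      ⊆ {G | IsKFace (Pl sz) 0 G} := by
    rintro _ ⟨t, -, rfl⟩
    exact zero_face sz hsz hM t
  have hinj : Function.Injective (fun t => ({Phi sz t} : Set (Euc (M * 2)))) := by
    intro t t' h
    exact Phi_injective sz (Set.singleton_eq_singleton_iff.1 h)
  have h1 : ((fun t => ({Phi sz t} : Set (Euc (M * 2)))) '' Set.univ).ncard = ∏ i, sz i := by
    rw [Set.ncard_image_of_injective _ hinj, Set.ncard_univ, Nat.card_eq_fintype_card,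
      Fintype.card_pi]
    exact Finset.prod_congr rfl (fun i _ => Fintype.card_fin _)
  rw [fVec, ← h1]
  exact Set.ncard_le_ncard hsub (fVec_le sz hsz 0).2

include hsz in
lemma dim_Pl : dimSet (Pl sz) = ∑ i, (if 3 ≤ sz i then 2 else 1) := by
  have h := dim_hull sz hsz (fun i => univLab (sz i) (hsz i))
  have hpi : Set.pi Set.univ
      (fun i => (↑(realize (univLab (sz i) (hsz i))) : Set (Fin (sz i)))) = Set.univ := by
    apply Set.eq_univ_iff_forall.2
    intro t i _
    show t i ∈ (↑(realize (univLab (sz i) (hsz i))) : Set (Fin (sz i)))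
    rw [realize_univLab]
    simp
  rw [hpi, Set.image_univ] at h
  have hV : ((Vx sz : Finset (Euc (M * 2))) : Set (Euc (M * 2))) = Set.range (Phi sz) := by
    rw [Vx, Finset.coe_image, Finset.coe_univ, Set.image_univ]
  rw [Pl, hV, h]
  exact Finset.sum_congr rfl (fun i _ => dl_univLab (sz i) (hsz i))

include hsz in
lemma TT_card_le (k : ℕ) :
    (TT sz k).card ≤ (∑ E ∈ powersetCard k (univ : Finset (Fin M)),
        ∏ i, (if i ∈ E then labCnt (sz i) 1 else labCnt (sz i) 0))
      + ∑ i ∈ univ.filter (fun i => 3 ≤ sz i),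
          ∏ i' ∈ univ.erase i, Fintype.card (Lab (sz i')) := by
  classical
  have hsplit : ((TT sz k).filter (fun l => ∀ i, dl (l i) ≤ 1)).card
      + ((TT sz k).filter (fun l => ¬ ∀ i, dl (l i) ≤ 1)).card = (TT sz k).card :=
    card_filter_add_card_filter_not _
  have h1 : ((TT sz k).filter (fun l => ∀ i, dl (l i) ≤ 1)).card
      ≤ ∑ E ∈ powersetCard k (univ : Finset (Fin M)),
        ∏ i, (if i ∈ E then labCnt (sz i) 1 else labCnt (sz i) 0) := by
    have hfib : ∀ l ∈ (TT sz k).filter (fun l => ∀ i, dl (l i) ≤ 1),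
        univ.filter (fun i => dl (l i) = 1) ∈ powersetCard k (univ : Finset (Fin M)) := by
      intro l hl
      rw [mem_powersetCard]
      refine ⟨subset_univ _, ?_⟩
      obtain ⟨hlT, hl1⟩ := mem_filter.1 hl
      have hk : ∑ i, dl (l i) = k := (mem_filter.1 hlT).2
      rw [← hk, Finset.card_filter]
      apply Finset.sum_congr rfl
      intro i _
      have := hl1 i
      by_cases h : dl (l i) = 1
      · rw [if_pos h, h]
      · rw [if_neg h]
        exact (Nat.lt_one_iff.1 (lt_of_le_of_ne this h)).symm
    rw [Finset.card_eq_sum_card_fiberwise hfib]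
    apply Finset.sum_le_sum
    intro E hE
    have hsubset : ((TT sz k).filter (fun l => ∀ i, dl (l i) ≤ 1)).filter
        (fun l => univ.filter (fun i => dl (l i) = 1) = E)
        ⊆ Fintype.piFinset (fun i => univ.filter
            (fun lab : Lab (sz i) => dl lab = if i ∈ E then 1 else 0)) := by
      intro l hl
      rw [Fintype.mem_piFinset]
      intro i
      obtain ⟨hlT1, hlE⟩ := mem_filter.1 hl
      obtain ⟨-, hle1⟩ := mem_filter.1 hlT1
      rw [mem_filter]
      refine ⟨mem_univ _, ?_⟩
      by_cases hi : i ∈ E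
      · rw [if_pos hi]
        rw [← hlE] at hi
        exact (mem_filter.1 hi).2
      · rw [if_neg hi]
        rw [← hlE] at hi
        have h2 : ¬ dl (l i) = 1 := fun hc => hi (mem_filter.2 ⟨mem_univ _, hc⟩)
        have := hle1 i
        exact Nat.lt_one_iff.1 (lt_of_le_of_ne this h2)
    calc _ ≤ _ := card_le_card hsubset
      _ = ∏ i, (univ.filter
          (fun lab : Lab (sz i) => dl lab = if i ∈ E then 1 else 0)).card :=
        Fintype.card_piFinset _
      _ = ∏ i, (if i ∈ E then labCnt (sz i) 1 else labCnt (sz i) 0) := by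
        apply Finset.prod_congr rfl
        intro i _
        by_cases hi : i ∈ E
        · rw [if_pos hi, if_pos hi, card_filter_dl]
        · rw [if_neg hi, if_neg hi, card_filter_dl]
  have h2 : ((TT sz k).filter (fun l => ¬ ∀ i, dl (l i) ≤ 1)).card
      ≤ ∑ i ∈ univ.filter (fun i => 3 ≤ sz i),
          ∏ i' ∈ univ.erase i, Fintype.card (Lab (sz i')) := by
    have hsub : (TT sz k).filter (fun l => ¬ ∀ i, dl (l i) ≤ 1)
        ⊆ (univ.filter (fun i => 3 ≤ sz i)).biUnion
          (fun i => univ.filter (fun l : ∀ i, Lab (sz i) => dl (l i) = 2)) := by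
      intro l hl
      obtain ⟨-, hnot⟩ := mem_filter.1 hl
      push_neg at hnot
      obtain ⟨i, hi⟩ := hnot
      have h2' : dl (l i) = 2 := le_antisymm (dl_le (l i)) hi
      rw [mem_biUnion]
      exact ⟨i, mem_filter.2 ⟨mem_univ _, dl_eq_two h2'⟩,
        mem_filter.2 ⟨mem_univ _, h2'⟩⟩
    calc _ ≤ _ := card_le_card hsub
      _ ≤ ∑ i ∈ univ.filter (fun i => 3 ≤ sz i),
          (univ.filter (fun l : ∀ i, Lab (sz i) => dl (l i) = 2)).card := card_biUnion_le
      _ ≤ _ := by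
        apply Finset.sum_le_sum
        intro i hi
        have h3 : 3 ≤ sz i := (mem_filter.1 hi).2
        have hsubset : univ.filter (fun l : ∀ i, Lab (sz i) => dl (l i) = 2) ⊆
            Fintype.piFinset (fun i' => if i' = i then
              univ.filter (fun lab : Lab (sz i') => dl lab = 2) else univ) := by
          intro l hl
          rw [Fintype.mem_piFinset]
          intro i'
          by_cases hii : i' = i
          · subst hii
            rw [if_pos rfl, mem_filter]
            exact ⟨mem_univ _, (mem_filter.1 hl).2⟩
          · rw [if_neg hii]
            exact mem_univ _
        calc _ ≤ _ := card_le_card hsubset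
          _ = ∏ i', (if i' = i then
              (univ.filter (fun lab : Lab (sz i') => dl lab = 2)).card
              else Fintype.card (Lab (sz i'))) := by
            rw [Fintype.card_piFinset]
            apply Finset.prod_congr rfl
            intro i' _
            by_cases hii : i' = i
            · subst hii
              rw [if_pos rfl, if_pos rfl]
            · rw [if_neg hii, if_neg hii, card_univ]
          _ = ∏ i' ∈ univ.erase i, Fintype.card (Lab (sz i')) := by
            rw [← Finset.mul_prod_erase _ _ (mem_univ i), if_pos rfl, card_filter_dl]
            have hlc : labCnt (sz i) 2 = 1 := by simp [labCnt, h3]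
            rw [hlc, one_mul]
            apply Finset.prod_congr rfl
            intro i' hi'
            rw [if_neg (mem_erase.1 hi').1]
  rw [← hsplit]
  exact Nat.add_le_add h1 h2

include hsz in
lemma T2_bound (n : ℕ) (hn : 3 ≤ n) (hvals : ∀ i, sz i = 2 ∨ sz i = n) :
    (∑ i ∈ univ.filter (fun i => 3 ≤ sz i),
        ∏ i' ∈ univ.erase i, Fintype.card (Lab (sz i'))) * n
      ≤ M * 3 ^ (M - 1) * ∏ i, sz i := by
  classical
  have hterm : ∀ i ∈ univ.filter (fun i => 3 ≤ sz i),
      (∏ i' ∈ univ.erase i, Fintype.card (Lab (sz i'))) * n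
        ≤ 3 ^ (M - 1) * ∏ i, sz i := by
    intro i hi
    have h3 : 3 ≤ sz i := (mem_filter.1 hi).2
    have hszi : sz i = n := by
      rcases hvals i with h | h
      · omega
      · exact h
    have hb : ∏ i' ∈ univ.erase i, Fintype.card (Lab (sz i'))
        ≤ ∏ i' ∈ univ.erase i, 3 * sz i' := by
      apply Finset.prod_le_prod'
      intro i' _
      exact card_Lab (sz i') (hsz i')
    have hc : ∏ i' ∈ univ.erase i, 3 * sz i'
        = 3 ^ (M - 1) * ∏ i' ∈ univ.erase i, sz i' := by
      rw [Finset.prod_mul_distrib, Finset.prod_const, card_erase_of_mem (mem_univ i),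
        card_univ, Fintype.card_fin]
    calc (∏ i' ∈ univ.erase i, Fintype.card (Lab (sz i'))) * n
        ≤ (3 ^ (M - 1) * ∏ i' ∈ univ.erase i, sz i') * n := by
          apply Nat.mul_le_mul_right
          rw [← hc]
          exact hb
      _ = 3 ^ (M - 1) * ((∏ i' ∈ univ.erase i, sz i') * sz i) := by rw [hszi]; ring
      _ = 3 ^ (M - 1) * ∏ i, sz i := by rw [Finset.prod_erase_mul _ _ (mem_univ i)]
  calc (∑ i ∈ univ.filter (fun i => 3 ≤ sz i),
      ∏ i' ∈ univ.erase i, Fintype.card (Lab (sz i'))) * n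
      = ∑ i ∈ univ.filter (fun i => 3 ≤ sz i),
        (∏ i' ∈ univ.erase i, Fintype.card (Lab (sz i'))) * n := Finset.sum_mul _ _ _
    _ ≤ ∑ _i ∈ univ.filter (fun i => 3 ≤ sz i), 3 ^ (M - 1) * ∏ i, sz i :=
        Finset.sum_le_sum hterm
    _ = (univ.filter (fun i => 3 ≤ sz i)).card * (3 ^ (M - 1) * ∏ i, sz i) := by
        rw [Finset.sum_const, smul_eq_mul]
    _ ≤ M * (3 ^ (M - 1) * ∏ i, sz i) := by
        apply Nat.mul_le_mul_right
        calc (univ.filter (fun i => 3 ≤ sz i)).card ≤ (univ : Finset (Fin M)).card :=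
            card_le_card (filter_subset _ _)
          _ = M := by rw [card_univ, Fintype.card_fin]
    _ = M * 3 ^ (M - 1) * ∏ i, sz i := by ring

/-! ### Size specialization and parity computations -/

lemma labCnt0 (s : ℕ) : labCnt s 0 = s := rfl

lemma labCnt1 (s : ℕ) (hs3 : 3 ≤ s) : labCnt s 1 = s := by
  unfold labCnt
  rw [if_neg one_ne_zero, if_pos rfl, if_pos hs3]
  omega

lemma labCnt1_two : labCnt 2 1 = 1 := by decide

lemma labCnt0_two : labCnt 2 0 = 2 := rfl

lemma prod_ite_point {M : ℕ} (i₀ : Fin M) (f : Fin M → ℕ) (a : ℕ)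
    (h0 : f i₀ = a) (b : ℕ) (h1 : ∀ i, i ≠ i₀ → f i = b) :
    ∏ i, f i = a * b ^ (M - 1) := by
  rw [← Finset.mul_prod_erase univ f (mem_univ i₀), h0]
  congr 1
  rw [Finset.prod_congr rfl (fun i hi => h1 i (mem_erase.1 hi).1), Finset.prod_const,
    card_erase_of_mem (mem_univ _), card_univ, Fintype.card_fin]

lemma sum_ite_point {M : ℕ} (i₀ : Fin M) (f : Fin M → ℕ) (a : ℕ)
    (h0 : f i₀ = a) (b : ℕ) (h1 : ∀ i, i ≠ i₀ → f i = b) :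
    ∑ i, f i = a + (M - 1) * b := by
  rw [← Finset.add_sum_erase univ f (mem_univ i₀), h0]
  congr 1
  rw [Finset.sum_congr rfl (fun i hi => h1 i (mem_erase.1 hi).1), Finset.sum_const,
    card_erase_of_mem (mem_univ _), card_univ, Fintype.card_fin, smul_eq_mul]

/-- Sizes: all factors are `n`-gons except, for odd `d`, one segment. -/
def szF (d n : ℕ) : Fin ((d + 1) / 2) → ℕ := fun i => if 2 * (i : ℕ) + 1 = d then 2 else n

lemma szF_ge2 (d n : ℕ) (hn : 3 ≤ n) : ∀ i, 2 ≤ szF d n i := by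
  intro i
  rw [szF]
  split_ifs <;> omega

lemma szF_vals (d n : ℕ) : ∀ i, szF d n i = 2 ∨ szF d n i = n := by
  intro i
  rw [szF]
  split_ifs
  · exact Or.inl rfl
  · exact Or.inr rfl

lemma szF_even (d n : ℕ) (hd : d % 2 = 0) : ∀ i, szF d n i = n := by
  intro i
  rw [szF, if_neg]
  omega

lemma szF_odd (d n : ℕ) (hd : d % 2 = 1) :
    ∃ i₀ : Fin ((d + 1) / 2), ∀ i, szF d n i = if i = i₀ then 2 else n := by
  refine ⟨⟨(d - 1) / 2, by omega⟩, fun i => ?_⟩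
  rw [szF]
  by_cases h : (i : ℕ) = (d - 1) / 2
  · rw [if_pos (by omega), if_pos (Fin.ext h)]
  · rw [if_neg (by omega), if_neg (fun hc => h (by rw [hc]))]

lemma card_powersetCard_not_mem {M : ℕ} (i₀ : Fin M) (k : ℕ) :
    ((powersetCard k (univ : Finset (Fin M))).filter (fun E => i₀ ∉ E)).card
      = (M - 1).choose k := by
  classical
  have he : (powersetCard k (univ : Finset (Fin M))).filter (fun E => i₀ ∉ E)
      = powersetCard k (univ.erase i₀) := by
    ext E
    simp only [mem_filter, mem_powersetCard, Finset.subset_erase]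
    tauto
  rw [he, card_powersetCard, card_erase_of_mem (mem_univ _), card_univ, Fintype.card_fin]

end RhoAux

open RhoAux in
/-- For `d ≥ 1`, `0 ≤ k ≤ d-1`, and real `ε > 0`, there is a
`d`-polytope `P` with `f_k(P) < (ρ(d,k) + ε) ⬝ f_0(P)`. -/
theorem exists_polytope_vertex_ratio_close (d k : ℕ) (hd : 1 ≤ d) (hk : k + 1 ≤ d)
    (ε : ℝ) (hε : 0 < ε) :
    ∃ (N : ℕ) (P : Set (Euc N)), IsPolytope P ∧ dimSet P = d ∧
      (fVec P k : ℝ) < ((rho d k : ℚ) + ε) * (fVec P 0 : ℝ) := by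
  classical
  open Finset in
  set M : ℕ := (d + 1) / 2 with hMdef
  have hM1 : 1 ≤ M := by omega
  set B : ℕ := M * 3 ^ (M - 1) with hBdef
  set n : ℕ := max 3 (⌊(B : ℝ) / ε⌋₊ + 1) with hndef
  have hn3 : 3 ≤ n := le_max_left _ _
  have hn0 : 0 < n := by omega
  have hnε : (B : ℝ) < ε * n := by
    have h1 : (B : ℝ) / ε < ((⌊(B : ℝ) / ε⌋₊ + 1 : ℕ) : ℝ) := by
      push_cast
      exact Nat.lt_floor_add_one _
    have h2 : ((⌊(B : ℝ) / ε⌋₊ + 1 : ℕ) : ℝ) ≤ (n : ℝ) := by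
      exact_mod_cast le_max_right 3 _
    have h3 : (B : ℝ) / ε < n := lt_of_lt_of_le h1 h2
    calc (B : ℝ) = (B : ℝ) / ε * ε := by field_simp
      _ < n * ε := mul_lt_mul_of_pos_right h3 hε
      _ = ε * n := mul_comm _ _
  set sz : Fin M → ℕ := szF d n with hszdef
  have hsz : ∀ i, 2 ≤ sz i := szF_ge2 d n hn3
  -- dimension
  have hdim : dimSet (Pl sz) = d := by
    rw [dim_Pl sz hsz]
    rcases Nat.even_or_odd d with he | ho
    · have h0 : d % 2 = 0 := Nat.even_iff.1 he
      have hall : ∀ i, sz i = n := szF_even d n h0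
      rw [Finset.sum_congr rfl (fun i _ => by rw [hall i, if_pos hn3]),
        Finset.sum_const, card_univ, Fintype.card_fin, smul_eq_mul]
      omega
    · have h1 : d % 2 = 1 := Nat.odd_iff.1 ho
      obtain ⟨i₀, hpt'⟩ := szF_odd d n h1
      have hpt : ∀ i, sz i = if i = i₀ then 2 else n := hpt'
      rw [sum_ite_point i₀ _ 1 (by rw [hpt, if_pos rfl]; norm_num) 2
        (fun i hi => by rw [hpt, if_neg hi, if_pos hn3])]
      omega
  -- products
  have hprod2 : ∀ i, 2 ≤ sz i := hsz
  have hPn_pos : 0 < ∏ i, sz i := Finset.prod_pos (fun i _ => by have := hsz i; omega)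
  -- counting
  have hface := (fVec_le sz hsz k).1
  have hcount := TT_card_le sz hsz k
  have hT2 := T2_bound sz hsz n hn3 (szF_vals d n)
  have hf0 := f0_ge sz hsz hM1
  set CNT : ℕ := ∑ E ∈ powersetCard k (univ : Finset (Fin M)),
    ∏ i, (if i ∈ E then labCnt (sz i) 1 else labCnt (sz i) 0) with hCNTdef
  set B2 : ℕ := ∑ i ∈ univ.filter (fun i => 3 ≤ sz i),
    ∏ i' ∈ univ.erase i, Fintype.card (Lab (sz i')) with hB2def
  -- the key identity
  have hCNT2 : 2 * CNT = (((d + 1) / 2).choose k + (d / 2).choose k) * ∏ i, sz i := by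
    rcases Nat.even_or_odd d with he | ho
    · have h0 : d % 2 = 0 := Nat.even_iff.1 he
      have hall : ∀ i, sz i = n := szF_even d n h0
      have hprodn : ∀ E : Finset (Fin M),
          (∏ i, (if i ∈ E then labCnt (sz i) 1 else labCnt (sz i) 0)) = n ^ M := by
        intro E
        rw [Finset.prod_congr rfl (fun i _ => ?_), Finset.prod_const, card_univ,
          Fintype.card_fin]
        rw [hall i]
        by_cases hi : i ∈ E
        · rw [if_pos hi, labCnt1 n hn3]
        · rw [if_neg hi, labCnt0]
      have hCNTv : CNT = M.choose k * n ^ M := by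
        rw [hCNTdef, Finset.sum_congr rfl (fun E _ => hprodn E), Finset.sum_const,
          card_powersetCard, card_univ, Fintype.card_fin, smul_eq_mul]
      have hPn : ∏ i, sz i = n ^ M := by
        rw [Finset.prod_congr rfl (fun i _ => hall i), Finset.prod_const, card_univ,
          Fintype.card_fin]
      rw [hCNTv, hPn, show ((d + 1) / 2).choose k = M.choose k from rfl,
        show d / 2 = M by omega]
      ring
    · have h1 : d % 2 = 1 := Nat.odd_iff.1 ho
      obtain ⟨i₀, hpt'⟩ := szF_odd d n h1
      have hpt : ∀ i, sz i = if i = i₀ then 2 else n := hpt'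
      have hprodE : ∀ E : Finset (Fin M),
          (∏ i, (if i ∈ E then labCnt (sz i) 1 else labCnt (sz i) 0))
            = (if i₀ ∈ E then 1 else 2) * n ^ (M - 1) := by
        intro E
        apply prod_ite_point i₀
        · rw [hpt, if_pos rfl]
          by_cases hi : i₀ ∈ E
          · rw [if_pos hi, if_pos hi, labCnt1_two]
          · rw [if_neg hi, if_neg hi, labCnt0_two]
        · intro i hi
          rw [hpt, if_neg hi]
          by_cases hiE : i ∈ E
          · rw [if_pos hiE, labCnt1 n hn3]
          · rw [if_neg hiE, labCnt0]
      have hsum : CNT = ∑ E ∈ powersetCard k (univ : Finset (Fin M)),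
          (if i₀ ∈ E then 1 else 2) * n ^ (M - 1) := by
        rw [hCNTdef]
        exact Finset.sum_congr rfl (fun E _ => hprodE E)
      rw [hsum, ← Finset.sum_filter_add_sum_filter_not _ (fun E => i₀ ∈ E)]
      have hs1 : ∑ E ∈ (powersetCard k (univ : Finset (Fin M))).filter (fun E => i₀ ∈ E),
          (if i₀ ∈ E then 1 else 2) * n ^ (M - 1)
          = ((powersetCard k (univ : Finset (Fin M))).filter
              (fun E => i₀ ∈ E)).card * n ^ (M - 1) := by
        rw [Finset.sum_congr rfl (fun E hE => by
          rw [if_pos (mem_filter.1 hE).2, one_mul]), Finset.sum_const, smul_eq_mul]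
      have hs2 : ∑ E ∈ (powersetCard k (univ : Finset (Fin M))).filter (fun E => i₀ ∉ E),
          (if i₀ ∈ E then 1 else 2) * n ^ (M - 1)
          = (M - 1).choose k * (2 * n ^ (M - 1)) := by
        rw [Finset.sum_congr rfl (fun E hE => by
          rw [if_neg (mem_filter.1 hE).2]), Finset.sum_const, smul_eq_mul,
          card_powersetCard_not_mem]
      have hcards : ((powersetCard k (univ : Finset (Fin M))).filter
            (fun E => i₀ ∈ E)).card + (M - 1).choose k = M.choose k := by
        have := Finset.card_filter_add_card_filter_not
          (s := powersetCard k (univ : Finset (Fin M))) (p := fun E => i₀ ∈ E)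
        rw [card_powersetCard, card_univ, Fintype.card_fin] at this
        rw [← card_powersetCard_not_mem i₀ k]
        exact this
      have hPn : ∏ i, sz i = 2 * n ^ (M - 1) := by
        apply prod_ite_point i₀ _ 2 (by rw [hpt, if_pos rfl]) n
          (fun i hi => by rw [hpt, if_neg hi])
      rw [hs1, hs2, hPn, show ((d + 1) / 2).choose k = M.choose k from rfl,
        show d / 2 = M - 1 by omega]
      calc 2 * (((powersetCard k (univ : Finset (Fin M))).filter
              (fun E => i₀ ∈ E)).card * n ^ (M - 1)
            + (M - 1).choose k * (2 * n ^ (M - 1)))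
          = (((powersetCard k (univ : Finset (Fin M))).filter
              (fun E => i₀ ∈ E)).card + (M - 1).choose k) * (2 * n ^ (M - 1))
            + (M - 1).choose k * (2 * n ^ (M - 1)) := by ring
        _ = M.choose k * (2 * n ^ (M - 1)) + (M - 1).choose k * (2 * n ^ (M - 1)) := by
            rw [hcards]
        _ = (M.choose k + (M - 1).choose k) * (2 * n ^ (M - 1)) := by ring
  -- final real chain
  refine ⟨M * 2, Pl sz, isPolytope_Pl sz, hdim, ?_⟩
  have hrho : ((rho d k : ℚ) : ℝ) * 2
      = ((((d + 1) / 2).choose k + (d / 2).choose k : ℕ) : ℝ) := by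
    rw [rho]
    push_cast
    ring
  have hrho_nonneg : (0 : ℝ) ≤ ((rho d k : ℚ) : ℝ) := by
    have : (0 : ℝ) ≤ ((((d + 1) / 2).choose k + (d / 2).choose k : ℕ) : ℝ) := by positivity
    linarith
  set Pn : ℝ := ((∏ i, sz i : ℕ) : ℝ) with hPndef
  have hPnR : (0 : ℝ) < Pn := by
    rw [hPndef]
    exact_mod_cast hPn_pos
  have hCNTR : (CNT : ℝ) = ((rho d k : ℚ) : ℝ) * Pn := by
    have h1 : (2 : ℝ) * CNT
        = ((((d + 1) / 2).choose k + (d / 2).choose k : ℕ) : ℝ) * Pn := by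
      rw [hPndef]
      exact_mod_cast congrArg (fun x : ℕ => (x : ℝ)) hCNT2
    rw [← hrho] at h1
    linarith
  have hB2R : (B2 : ℝ) < ε * Pn := by
    have h1 : (B2 : ℝ) * n ≤ (B : ℝ) * Pn := by
      rw [hPndef, hBdef]
      exact_mod_cast hT2
    have h2 : (B : ℝ) * Pn < (ε * n) * Pn := mul_lt_mul_of_pos_right hnε hPnR
    have h3 : (B2 : ℝ) * n < (ε * Pn) * n := by
      calc (B2 : ℝ) * n ≤ (B : ℝ) * Pn := h1
        _ < (ε * n) * Pn := h2
        _ = (ε * Pn) * n := by ring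
    exact lt_of_mul_lt_mul_right h3 (by positivity)
  have hfkR : (fVec (Pl sz) k : ℝ) ≤ (CNT : ℝ) + (B2 : ℝ) := by
    exact_mod_cast le_trans hface hcount
  have hf0R : Pn ≤ (fVec (Pl sz) 0 : ℝ) := by
    rw [hPndef]
    exact_mod_cast hf0
  calc (fVec (Pl sz) k : ℝ) ≤ (CNT : ℝ) + (B2 : ℝ) := hfkR
    _ < ((rho d k : ℚ) : ℝ) * Pn + ε * Pn := by
        rw [hCNTR]
        linarith
    _ = (((rho d k : ℚ) : ℝ) + ε) * Pn := by ring
    _ ≤ (((rho d k : ℚ) : ℝ) + ε) * (fVec (Pl sz) 0 : ℝ) := by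
        apply mul_le_mul_of_nonneg_left hf0R
        linarith
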